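/- Let (G, p) be an isostatic framework in ℝ³ with |V| ≥ 3. Then |E| = 3·|V| − 6. -/

import Mathlib

open Matrix

/-- The space of equilibrium loads on a finite configuration `p : V → ℝ³`:
loads `f` with `∑ f i = 0` and `∑ (p i) ⨯₃ (f i) = 0`. -/
def eqLoads (V : Type*) [Fintype V] (p : V → Fin 3 → ℝ) :
    Submodule ℝ (V → Fin 3 → ℝ) where
  carrier := {f | (∑ i, f i) = 0 ∧ (∑ i, (p i) ⨯₃ (f i)) = 0}
  zero_mem' := by simp
  add_mem' := by
    rintro f g ⟨hf1, hf2⟩ ⟨hg1, hg2⟩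
    constructor
    · simp only [Pi.add_apply, Finset.sum_add_distrib, hf1, hg1, add_zero]
    · simp only [Pi.add_apply, map_add, Finset.sum_add_distrib, hf2, hg2, add_zero]
  smul_mem' := by
    rintro c f ⟨hf1, hf2⟩
    constructor
    · simp only [Pi.smul_apply, ← Finset.smul_sum, hf1, smul_zero]
    · simp only [Pi.smul_apply, _root_.map_smul, ← Finset.smul_sum, hf2, smul_zero]

/-- The bar load of the edge `{i, j}`: value `p i − p j` at `i`, `p j − p i` at `j`, and `0`
elsewhere. -/
def barLoad {V : Type*} [DecidableEq V] (p : V → Fin 3 → ℝ) : Sym2 V → (V → Fin 3 → ℝ) :=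
  Sym2.lift ⟨fun i j k => if k = i then p i - p j else if k = j then p j - p i else 0,
    by
      intro i j
      funext k
      by_cases hi : k = i <;> by_cases hj : k = j <;> simp_all⟩

/-- A framework with edge set `E` is isostatic when the family of its bar loads is
linearly independent and spans the space of equilibrium loads. -/
def IsIsostatic {V : Type*} [Fintype V] [DecidableEq V]
    (E : Finset (Sym2 V)) (p : V → Fin 3 → ℝ) : Prop :=
  LinearIndependent ℝ (fun e : E => barLoad p (e : Sym2 V)) ∧
  Submodule.span ℝ (barLoad p '' (E : Set (Sym2 V))) = eqLoads V p


lemma cross_zero_dep {d₁ d₂ : Fin 3 → ℝ} (h : d₁ ⨯₃ d₂ = 0) (hd : d₁ ≠ 0) :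
    ∃ a : ℝ, d₂ = a • d₁ := by
  have e0 : d₁ 1 * d₂ 2 - d₁ 2 * d₂ 1 = 0 := by simpa [cross_apply] using congrFun h 0
  have e1 : d₁ 2 * d₂ 0 - d₁ 0 * d₂ 2 = 0 := by simpa [cross_apply] using congrFun h 1
  have e2 : d₁ 0 * d₂ 1 - d₁ 1 * d₂ 0 = 0 := by simpa [cross_apply] using congrFun h 2
  obtain ⟨k, hk⟩ := Function.ne_iff.mp hd
  simp only [Pi.zero_apply] at hk
  fin_cases k
  · have hk0 : d₁ 0 ≠ 0 := hk
    refine ⟨d₂ 0 / d₁ 0, funext fun j => ?_⟩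
    fin_cases j
    · show d₂ 0 = (d₂ 0 / d₁ 0) • d₁ 0; rw [smul_eq_mul]; field_simp
    · show d₂ 1 = (d₂ 0 / d₁ 0) • d₁ 1; rw [smul_eq_mul, div_mul_eq_mul_div, eq_div_iff hk0]; linear_combination e2
    · show d₂ 2 = (d₂ 0 / d₁ 0) • d₁ 2; rw [smul_eq_mul, div_mul_eq_mul_div, eq_div_iff hk0]; linear_combination -e1
  · have hk0 : d₁ 1 ≠ 0 := hk
    refine ⟨d₂ 1 / d₁ 1, funext fun j => ?_⟩
    fin_cases j
    · show d₂ 0 = (d₂ 1 / d₁ 1) • d₁ 0; rw [smul_eq_mul, div_mul_eq_mul_div, eq_div_iff hk0]; linear_combination -e2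
    · show d₂ 1 = (d₂ 1 / d₁ 1) • d₁ 1; rw [smul_eq_mul]; field_simp
    · show d₂ 2 = (d₂ 1 / d₁ 1) • d₁ 2; rw [smul_eq_mul, div_mul_eq_mul_div, eq_div_iff hk0]; linear_combination e0
  · have hk0 : d₁ 2 ≠ 0 := hk
    refine ⟨d₂ 2 / d₁ 2, funext fun j => ?_⟩
    fin_cases j
    · show d₂ 0 = (d₂ 2 / d₁ 2) • d₁ 0; rw [smul_eq_mul, div_mul_eq_mul_div, eq_div_iff hk0]; linear_combination e1
    · show d₂ 1 = (d₂ 2 / d₁ 2) • d₁ 1; rw [smul_eq_mul, div_mul_eq_mul_div, eq_div_iff hk0]; linear_combination -e0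
    · show d₂ 2 = (d₂ 2 / d₁ 2) • d₁ 2; rw [smul_eq_mul]; field_simp

lemma eq_zero_of_cross_dot {x n : Fin 3 → ℝ} (h1 : x ⨯₃ n = 0) (h2 : x ⬝ᵥ n = 0)
    (hn : n ≠ 0) : x = 0 := by
  have e0 : x 1 * n 2 - x 2 * n 1 = 0 := by simpa [cross_apply] using congrFun h1 0
  have e1 : x 2 * n 0 - x 0 * n 2 = 0 := by simpa [cross_apply] using congrFun h1 1
  have e2 : x 0 * n 1 - x 1 * n 0 = 0 := by simpa [cross_apply] using congrFun h1 2
  have ed : x 0 * n 0 + x 1 * n 1 + x 2 * n 2 = 0 := by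
    simpa [dotProduct, Fin.sum_univ_three] using h2
  have hs : n 0 ^ 2 + n 1 ^ 2 + n 2 ^ 2 ≠ 0 := by
    intro hc
    apply hn
    have h0 : n 0 = 0 := by nlinarith [sq_nonneg (n 0), sq_nonneg (n 1), sq_nonneg (n 2)]
    have ha : n 1 = 0 := by nlinarith [sq_nonneg (n 0), sq_nonneg (n 1), sq_nonneg (n 2)]
    have hb : n 2 = 0 := by nlinarith [sq_nonneg (n 0), sq_nonneg (n 1), sq_nonneg (n 2)]
    funext j; fin_cases j
    · exact h0
    · exact ha
    · exact hb
  funext j; fin_cases j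
  · show x 0 = 0
    have key : x 0 * (n 0 ^ 2 + n 1 ^ 2 + n 2 ^ 2) = 0 := by
      linear_combination n 0 * ed + n 1 * e2 - n 2 * e1
    exact (mul_eq_zero.mp key).resolve_right hs
  · show x 1 = 0
    have key : x 1 * (n 0 ^ 2 + n 1 ^ 2 + n 2 ^ 2) = 0 := by
      linear_combination n 1 * ed - n 0 * e2 + n 2 * e0
    exact (mul_eq_zero.mp key).resolve_right hs
  · show x 2 = 0
    have key : x 2 * (n 0 ^ 2 + n 1 ^ 2 + n 2 ^ 2) = 0 := by
      linear_combination n 2 * ed + n 0 * e1 - n 1 * e0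
    exact (mul_eq_zero.mp key).resolve_right hs

lemma exists_cross_decomp {d₁ d₂ : Fin 3 → ℝ} (hli : LinearIndependent ℝ ![d₁, d₂])
    (c : Fin 3 → ℝ) : ∃ w u : Fin 3 → ℝ, d₁ ⨯₃ w + d₂ ⨯₃ u = c := by
  obtain ⟨hd2, hnd⟩ := linearIndependent_fin2.mp hli
  simp only [Matrix.cons_val_one, Matrix.head_cons, Matrix.cons_val_zero] at hd2 hnd
  set n := d₁ ⨯₃ d₂ with hn_def
  have hn : n ≠ 0 := by
    intro h
    have h' : d₂ ⨯₃ d₁ = 0 := by rw [← cross_anticomm, ← hn_def, h, neg_zero]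
    obtain ⟨a, ha⟩ := cross_zero_dep h' hd2
    exact hnd a ha.symm
  have hnn : n ⬝ᵥ n ≠ 0 := fun h => hn (dotProduct_self_eq_zero.mp h)
  -- linear independence of ![n, d₁×n, d₂×n]
  have hli3 : LinearIndependent ℝ ![n, d₁ ⨯₃ n, d₂ ⨯₃ n] := by
    rw [Fintype.linearIndependent_iff]
    intro g hg
    simp only [Fin.sum_univ_three, Matrix.cons_val_zero, Matrix.cons_val_one, Matrix.head_cons,
      Matrix.cons_val_two, Matrix.tail_cons] at hg
    have hg0 : g 0 = 0 := by
      have := congrArg (fun v => v ⬝ᵥ n) hg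
      simp only [add_dotProduct, smul_dotProduct, zero_dotProduct, smul_eq_mul,
        dotProduct_comm (d₁ ⨯₃ n) n, dotProduct_comm (d₂ ⨯₃ n) n, dot_cross_self,
        mul_zero, add_zero] at this
      exact (mul_eq_zero.mp this).resolve_right hnn
    have hx : (g 1 • d₁ + g 2 • d₂) ⨯₃ n = 0 := by
      have : (crossProduct (g 1 • d₁ + g 2 • d₂)) n
          = g 1 • (d₁ ⨯₃ n) + g 2 • (d₂ ⨯₃ n) := by
        simp [map_add, _root_.map_smul, LinearMap.add_apply, LinearMap.smul_apply]
      rw [this]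
      rw [hg0] at hg
      simpa using hg
    have hxd : (g 1 • d₁ + g 2 • d₂) ⬝ᵥ n = 0 := by
      have t1 : d₁ ⬝ᵥ n = 0 := dot_self_cross d₁ d₂
      have t2 : d₂ ⬝ᵥ n = 0 := dot_cross_self d₁ d₂
      rw [add_dotProduct, smul_dotProduct, smul_dotProduct, t1, t2, smul_zero, smul_zero, add_zero]
    have hx0 : g 1 • d₁ + g 2 • d₂ = 0 := eq_zero_of_cross_dot hx hxd hn
    have h12 := Fintype.linearIndependent_iff.mp hli ![g 1, g 2] (by
      simpa [Fin.sum_univ_two] using hx0)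
    intro i
    fin_cases i
    · exact hg0
    · simpa using h12 0
    · simpa using h12 1
  have hspan : Submodule.span ℝ (Set.range ![n, d₁ ⨯₃ n, d₂ ⨯₃ n]) = ⊤ :=
    hli3.span_eq_top_of_card_eq_finrank (by simp [Module.finrank_fintype_fun_eq_card])
  have hc : c ∈ Submodule.span ℝ (Set.range ![n, d₁ ⨯₃ n, d₂ ⨯₃ n]) := by
    rw [hspan]; trivial
  obtain ⟨a, ha⟩ := (Submodule.mem_span_range_iff_exists_fun ℝ).mp hc
  refine ⟨a 0 • d₂ + a 1 • n, a 2 • n, ?_⟩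
  simp only [Fin.sum_univ_three, Matrix.cons_val_zero, Matrix.cons_val_one, Matrix.head_cons,
    Matrix.cons_val_two, Matrix.tail_cons] at ha
  rw [← ha]
  simp [map_add, _root_.map_smul, hn_def]

lemma mem_eqLoads {V : Type*} [Fintype V] (p : V → Fin 3 → ℝ) (f : V → Fin 3 → ℝ) :
    f ∈ eqLoads V p ↔ (∑ i, f i) = 0 ∧ (∑ i, (p i) ⨯₃ (f i)) = 0 := Iff.rfl

lemma sum_cross_single {V : Type*} [Fintype V] [DecidableEq V] (p : V → Fin 3 → ℝ)
    (i : V) (w : Fin 3 → ℝ) :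
    (∑ j, (p j) ⨯₃ ((Pi.single i w : V → Fin 3 → ℝ) j)) = (p i) ⨯₃ w := by
  rw [Finset.sum_eq_single i]
  · rw [Pi.single_eq_same]
  · intro j _ hj
    rw [Pi.single_eq_of_ne hj, map_zero]
  · simp

/-- The total load map `f ↦ (∑ f i, ∑ p i ⨯₃ f i)`. -/
def loadMap (V : Type*) [Fintype V] (p : V → Fin 3 → ℝ) :
    (V → Fin 3 → ℝ) →ₗ[ℝ] (Fin 3 → ℝ) × (Fin 3 → ℝ) where
  toFun f := (∑ i, f i, ∑ i, (p i) ⨯₃ (f i))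
  map_add' f g := by
    simp only [Pi.add_apply, map_add, Finset.sum_add_distrib, Prod.mk_add_mk]
  map_smul' c f := by
    simp only [Pi.smul_apply, _root_.map_smul, ← Finset.smul_sum, RingHom.id_apply,
      Prod.smul_mk]

lemma single_mem_range_loadMap {V : Type*} [Fintype V] [DecidableEq V] (p : V → Fin 3 → ℝ)
    (i : V) (v : Fin 3 → ℝ) : (v, (p i) ⨯₃ v) ∈ LinearMap.range (loadMap V p) := by
  refine ⟨Pi.single i v, ?_⟩
  have h1 : (∑ j, Pi.single i v j) = v := by
    simp [Finset.sum_pi_single']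
  have h2 : (∑ j, (p j) ⨯₃ ((Pi.single i v : V → Fin 3 → ℝ) j)) = (p i) ⨯₃ v := by
    rw [Finset.sum_eq_single i]
    · rw [Pi.single_eq_same]
    · intro j _ hj
      rw [Pi.single_eq_of_ne hj, map_zero]
    · simp
  simp [loadMap, h1, h2]

lemma range_loadMap_eq_top {V : Type*} [Fintype V] [DecidableEq V] (p : V → Fin 3 → ℝ)
    (hex : ∃ i j k : V, LinearIndependent ℝ ![p j - p i, p k - p i]) :
    LinearMap.range (loadMap V p) = ⊤ := by
  obtain ⟨i, j, k, hli⟩ := hex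
  set S := LinearMap.range (loadMap V p) with hS
  have hd : ∀ (m : V) (v : Fin 3 → ℝ), ((0 : Fin 3 → ℝ), (p m - p i) ⨯₃ v) ∈ S := by
    intro m v
    have h := S.sub_mem (single_mem_range_loadMap p m v) (single_mem_range_loadMap p i v)
    have : ((v, (p m) ⨯₃ v) - (v, (p i) ⨯₃ v) : (Fin 3 → ℝ) × (Fin 3 → ℝ))
        = ((0 : Fin 3 → ℝ), (p m - p i) ⨯₃ v) := by
      rw [Prod.mk_sub_mk]
      refine Prod.ext (by simp) ?_
      show (p m) ⨯₃ v - (p i) ⨯₃ v = _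
      rw [map_sub (crossProduct (R := ℝ))]
      rfl
    rwa [this] at h
  have hb : ∀ b : Fin 3 → ℝ, ((0 : Fin 3 → ℝ), b) ∈ S := by
    intro b
    obtain ⟨w, u, hwu⟩ := exists_cross_decomp hli b
    have h := S.add_mem (hd j w) (hd k u)
    rwa [Prod.mk_add_mk, add_zero, hwu] at h
  have ha : ∀ a : Fin 3 → ℝ, ((a, (0 : Fin 3 → ℝ)) : _ × _) ∈ S := by
    intro a
    have h := S.sub_mem (single_mem_range_loadMap p i a) (hb ((p i) ⨯₃ a))
    rwa [Prod.mk_sub_mk, sub_zero, sub_self] at h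
  rw [Submodule.eq_top_iff']
  rintro ⟨a, b⟩
  have h := S.add_mem (ha a) (hb b)
  rwa [Prod.mk_add_mk, add_zero, zero_add] at h

/-- An isostatic framework `(G, p)` in `ℝ³` with at least `3` vertices has
`|E| = 3·|V| − 6` edges. -/
theorem isostatic_card_edges {V : Type*} [Fintype V] [DecidableEq V]
    (G : SimpleGraph V) [DecidableRel G.Adj] (p : V → Fin 3 → ℝ)
    (hframe : ∀ i j : V, G.Adj i j → p i ≠ p j)
    (hV : 3 ≤ Fintype.card V)
    (hiso : IsIsostatic G.edgeFinset p) :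
    G.edgeFinset.card = 3 * Fintype.card V - 6 := by
  obtain ⟨hli, hspan⟩ := hiso
  -- Step 1: the configuration is not collinear
  have hex : ∃ i j k : V, LinearIndependent ℝ ![p j - p i, p k - p i] := by
    by_contra hcon
    push_neg at hcon
    obtain ⟨d, hd⟩ : ∃ d : Fin 3 → ℝ, ∀ i j : V, ∃ c : ℝ, p i - p j = c • d := by
      by_cases hpc : ∀ i j : V, p i = p j
      · exact ⟨0, fun i j => ⟨0, by rw [hpc i j, sub_self, zero_smul]⟩⟩
      · push_neg at hpc
        obtain ⟨i₀, j₀, hne⟩ := hpc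
        have hv0 : p j₀ - p i₀ ≠ 0 := sub_ne_zero.mpr (Ne.symm hne)
        have hall : ∀ k : V, ∃ c : ℝ, p k - p i₀ = c • (p j₀ - p i₀) := by
          intro k
          by_contra hc
          push_neg at hc
          refine hcon i₀ k j₀ (linearIndependent_fin2.mpr ?_)
          constructor
          · simpa using hv0
          · intro a
            simpa using (hc a).symm
        refine ⟨p j₀ - p i₀, fun i j => ⟨(hall i).choose - (hall j).choose, ?_⟩⟩
        have hi := (hall i).choose_spec
        have hj := (hall j).choose_spec
        rw [sub_smul, ← hi, ← hj]
        abel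
    set W : Submodule ℝ (V → Fin 3 → ℝ) := Submodule.pi Set.univ (fun _ : V => ℝ ∙ d) with hW
    have hWle : eqLoads V p ≤ W := by
      rw [← hspan]
      refine Submodule.span_le.mpr ?_
      rintro x ⟨e, he, rfl⟩
      induction e using Sym2.ind with
      | _ a b =>
        rw [SetLike.mem_coe, hW, Submodule.mem_pi]
        intro m _
        show (if m = a then p a - p b else if m = b then p b - p a else 0) ∈ (ℝ ∙ d)
        split_ifs
        · obtain ⟨c, hc⟩ := hd a b
          exact Submodule.mem_span_singleton.mpr ⟨c, hc.symm⟩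
        · obtain ⟨c, hc⟩ := hd b a
          exact Submodule.mem_span_singleton.mpr ⟨c, hc.symm⟩
        · exact Submodule.zero_mem _
    have hvex : ∃ v : Fin 3 → ℝ, v ∉ (ℝ ∙ d) := by
      by_contra hvc
      push_neg at hvc
      have htop : (ℝ ∙ d : Submodule ℝ (Fin 3 → ℝ)) = ⊤ := Submodule.eq_top_iff'.mpr hvc
      rcases eq_or_ne d 0 with h0 | h0
      · rw [h0, Submodule.span_zero_singleton] at htop
        exact absurd htop bot_ne_top
      · have h1 := finrank_span_singleton (K := ℝ) h0
        rw [htop, finrank_top, Module.finrank_fintype_fun_eq_card] at h1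
        simp at h1
    obtain ⟨v, hv⟩ := hvex
    by_cases hinj : Function.Injective p
    · -- three distinct vertices with injective `p`
      obtain ⟨i, j, hij⟩ := Fintype.exists_pair_of_one_lt_card (by omega : 1 < Fintype.card V)
      obtain ⟨k, hk⟩ : ∃ k : V, k ∈ (Finset.univ \ {i, j} : Finset V) := by
        refine Finset.Nonempty.exists_mem (Finset.sdiff_nonempty.mpr fun hsub => ?_)
        have h1 := Finset.card_le_card hsub
        rw [Finset.card_univ, Finset.card_pair hij] at h1
        omega
      rw [Finset.mem_sdiff, Finset.mem_insert, Finset.mem_singleton] at hk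
      push_neg at hk
      obtain ⟨-, hki, hkj⟩ := hk
      obtain ⟨a, ha⟩ := hd i k
      obtain ⟨b, hb⟩ := hd j k
      have ha0 : a ≠ 0 := by
        intro h
        rw [h, zero_smul, sub_eq_zero] at ha
        exact hki.symm (hinj ha)
      have hb0 : b ≠ 0 := by
        intro h
        rw [h, zero_smul, sub_eq_zero] at hb
        exact hkj.symm (hinj hb)
      set f : V → Fin 3 → ℝ :=
        Pi.single i (b • v) + Pi.single k ((a - b) • v) - Pi.single j (a • v) with hf
      have hfi : f i = b • v := by
        rw [hf]
        simp only [Pi.sub_apply, Pi.add_apply, Pi.single_eq_same,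
          Pi.single_eq_of_ne (Ne.symm hki), Pi.single_eq_of_ne hij, add_zero, sub_zero]
      have hfmem : f ∈ eqLoads V p := by
        rw [mem_eqLoads]
        constructor
        · rw [hf]
          simp only [Pi.sub_apply, Pi.add_apply, Finset.sum_sub_distrib,
            Finset.sum_add_distrib, Finset.sum_pi_single', Finset.mem_univ, if_true]
          module
        · have hsum : (∑ m, (p m) ⨯₃ (f m))
              = (p i) ⨯₃ (b • v) + (p k) ⨯₃ ((a - b) • v) - (p j) ⨯₃ (a • v) := by
            rw [hf]
            simp only [Pi.sub_apply, Pi.add_apply, map_add, map_sub,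
              Finset.sum_sub_distrib, Finset.sum_add_distrib, sum_cross_single]
          rw [hsum, sub_eq_iff_eq_add.mp ha, sub_eq_iff_eq_add.mp hb]
          simp only [map_add, _root_.map_smul, LinearMap.add_apply, LinearMap.smul_apply]
          module
      have hfW := (Submodule.mem_pi.mp (hWle hfmem)) i (Set.mem_univ i)
      rw [hfi] at hfW
      have : v ∈ (ℝ ∙ d) := by
        have h := (ℝ ∙ d).smul_mem b⁻¹ hfW
        rwa [inv_smul_smul₀ hb0] at h
      exact hv this
    · obtain ⟨i, j, hpij, hij⟩ := Function.not_injective_iff.mp hinj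
      set f : V → Fin 3 → ℝ := Pi.single i v - Pi.single j v with hf
      have hfi : f i = v := by
        rw [hf]
        simp only [Pi.sub_apply, Pi.single_eq_same, Pi.single_eq_of_ne hij, sub_zero]
      have hfmem : f ∈ eqLoads V p := by
        rw [mem_eqLoads]
        constructor
        · rw [hf]
          simp only [Pi.sub_apply, Finset.sum_sub_distrib, Finset.sum_pi_single',
            Finset.mem_univ, if_true, sub_self]
        · have hsum : (∑ m, (p m) ⨯₃ (f m)) = (p i) ⨯₃ v - (p j) ⨯₃ v := by
            rw [hf]
            simp only [Pi.sub_apply, map_sub, Finset.sum_sub_distrib, sum_cross_single]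
          rw [hsum, hpij, sub_self]
      have hfW := (Submodule.mem_pi.mp (hWle hfmem)) i (Set.mem_univ i)
      rw [hfi] at hfW
      exact hv hfW
  -- Step 2: dimension count
  have hker : LinearMap.ker (loadMap V p) = eqLoads V p := by
    ext f
    rw [LinearMap.mem_ker]
    show (∑ i, f i, ∑ i, (p i) ⨯₃ (f i)) = 0 ↔ _
    rw [Prod.ext_iff, mem_eqLoads]
    exact Iff.rfl
  have hrange := range_loadMap_eq_top p hex
  have hrn := LinearMap.finrank_range_add_finrank_ker (loadMap V p)
  rw [hrange, hker] at hrn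
  have h6 : Module.finrank ℝ (⊤ : Submodule ℝ ((Fin 3 → ℝ) × (Fin 3 → ℝ))) = 6 := by
    rw [finrank_top, Module.finrank_prod, Module.finrank_fintype_fun_eq_card]
    simp
  have hdom : Module.finrank ℝ (V → Fin 3 → ℝ) = 3 * Fintype.card V := by
    rw [Module.finrank_pi_fintype]
    simp [Module.finrank_fintype_fun_eq_card, mul_comm]
  rw [h6, hdom] at hrn
  have hcard : G.edgeFinset.card = Module.finrank ℝ (eqLoads V p) := by
    have h := finrank_span_eq_card hli
    have himg : Set.range (fun e : ↥G.edgeFinset => barLoad p (e : Sym2 V))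
        = barLoad p '' (G.edgeFinset : Set (Sym2 V)) := by
      ext x
      constructor
      · rintro ⟨⟨e, he⟩, rfl⟩
        exact ⟨e, he, rfl⟩
      · rintro ⟨e, he, rfl⟩
        exact ⟨⟨e, he⟩, rfl⟩
    rw [himg, hspan, Fintype.card_coe] at h
    exact h.symm
  rw [hcard]
  omega
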